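/- Let X = X[λ, μ, 𝒜, C̄] and define π(F) = {α < λ : F ∩ X_α ≠ ∅} for F ⊆ X. If F ⊆ X and π(F) accumulates to some α of cofinality η with μ ≤ η < λ, then the derived set F' intersects the column X_α. -/

import Mathlib

open Set Ordinal Cardinal Topology

noncomputable section

namespace DSoukupPaper

/-- The set `S^λ_μ` of ordinals below `lam` of cofinality `mu`. -/
def Sset (lam : Ordinal.{0}) (mu : Cardinal.{0}) : Set Ordinal := {α | α < lam ∧ α.cof = mu}

/-- `C` is a club in the ordinal `o`. -/
def IsClubBelow (C : Set Ordinal.{0}) (o : Ordinal.{0}) : Prop :=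
  C ⊆ Set.Iio o ∧ (∀ β < o, ∃ γ ∈ C, β ≤ γ) ∧
    (∀ β < o, Order.IsSuccLimit β → (∀ γ < β, ∃ δ ∈ C, γ < δ ∧ δ < β) → β ∈ C)

/-- `A` is nonstationary in the ordinal `o`. -/
def IsNonstationaryBelow (A : Set Ordinal.{0}) (o : Ordinal.{0}) : Prop :=
  ∃ C : Set Ordinal, IsClubBelow C o ∧ ∀ x ∈ A, x ∉ C

/-- `A` is stationary in the ordinal `o`. -/
def IsStationaryBelow (A : Set Ordinal.{0}) (o : Ordinal.{0}) : Prop :=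
  ∀ C : Set Ordinal, IsClubBelow C o → ∃ x ∈ A, x ∈ C

/-- A `T₁` space is linearly D iff every nontrivial monotone open cover admits a
closed discrete big set (Guo–Junnila characterization, taken as definition). -/
def LinearlyDSpace (Y : Type*) [TopologicalSpace Y] : Prop :=
  ∀ 𝒰 : Set (Set Y), (∀ U ∈ 𝒰, IsOpen U) → ⋃₀ 𝒰 = Set.univ →
    IsChain (· ⊆ ·) 𝒰 → (∀ U ∈ 𝒰, U ≠ Set.univ) →
    ∃ D : Set Y, IsClosed D ∧ DiscreteTopology D ∧ ∀ U ∈ 𝒰, ¬D ⊆ U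

/-- The data of the construction `X[λ,μ,𝒜,C̄]`: cardinals `λ > μ = cf(μ)`,
a MAD family `𝒜 = {M^φ : φ < κ} ⊆ [μ]^μ`, and an `S^λ_μ`-club sequence
`C̄ = ⟨C_α : α ∈ S^λ_μ⟩`, given via increasing enumerations `a α : μ → C_α`. -/
structure Setup where
  lam : Cardinal.{0}
  mu : Cardinal.{0}
  kappa : Cardinal.{0}
  mu_reg : mu.IsRegular
  mu_lt_lam : mu < lam
  /-- the MAD family: `M φ` for `φ < κ` -/
  M : Ordinal.{0} → Set Ordinal.{0}
  M_sub : ∀ φ < kappa.ord, M φ ⊆ Set.Iio mu.ord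
  M_card : ∀ φ < kappa.ord, #(M φ) = Cardinal.lift.{1} mu
  M_ad : ∀ φ < kappa.ord, ∀ ψ < kappa.ord, φ ≠ ψ →
    #(↥(M φ ∩ M ψ)) < Cardinal.lift.{1} mu
  M_mad : ∀ N ⊆ Set.Iio mu.ord, #N = Cardinal.lift.{1} mu →
    ∃ φ < kappa.ord, #(↥(N ∩ M φ)) = Cardinal.lift.{1} mu
  /-- the club sequence: `a α ξ` is the `ξ`-th element of `C_α` -/
  a : Ordinal.{0} → Ordinal.{0} → Ordinal.{0}
  a_mono : ∀ α ∈ Sset lam.ord mu, ∀ ξ < mu.ord, ∀ ζ < ξ, a α ζ < a α ξ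
  a_lt : ∀ α ∈ Sset lam.ord mu, ∀ ξ < mu.ord, a α ξ < α
  a_unbounded : ∀ α ∈ Sset lam.ord mu, ∀ β < α, ∃ ξ < mu.ord, β ≤ a α ξ
  a_closed : ∀ α ∈ Sset lam.ord mu, ∀ ξ < mu.ord, Order.IsSuccLimit ξ →
    IsLUB (a α '' Set.Iio ξ) (a α ξ)

namespace Setup

variable (P : Setup)

/-- `C_α` as a set. -/
def C (α : Ordinal) : Set Ordinal := P.a α '' Set.Iio P.mu.ord

open Classical in
/-- the interval `I^ξ_α`. -/
def I (α ξ : Ordinal) : Set Ordinal :=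
  if Order.IsSuccLimit ξ then Set.Icc (P.a α ξ) (P.a α (ξ + 1)) else Set.Ioc (P.a α ξ) (P.a α (ξ + 1))

/-- the underlying set of the space: a subset of `λ × κ`. -/
def Xset : Set (Ordinal × Ordinal) :=
  {p | p.1 < P.lam.ord ∧
    ((p.1 ∈ Sset P.lam.ord P.mu ∧ p.2 < P.kappa.ord) ∨
      (p.1 ∉ Sset P.lam.ord P.mu ∧ p.2 = 0))}

/-- the column `X_α` (as a set of pairs). -/
def col (α : Ordinal) : Set (Ordinal × Ordinal) := {p ∈ P.Xset | p.1 = α}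

/-- basic neighborhood `U((α,φ),η)` for `α ∈ S^λ_μ`. -/
def U1 (α φ η : Ordinal) : Set (Ordinal × Ordinal) :=
  {(α, φ)} ∪ ⋃ γ ∈ (⋃ ξ ∈ {ξ | ξ ∈ P.M φ ∧ η ≤ ξ}, P.I α ξ), P.col γ

/-- basic neighborhood `U(α,β) = ⋃{X_γ : β < γ ≤ α}`. -/
def U3 (α β : Ordinal) : Set (Ordinal × Ordinal) := ⋃ γ ∈ Set.Ioc β α, P.col γ

/-- the collection of basic open sets. -/
def basics : Set (Set (Ordinal × Ordinal)) :=
  {B | (∃ α ∈ Sset P.lam.ord P.mu, ∃ φ < P.kappa.ord, ∃ η < P.mu.ord, B = P.U1 α φ η) ∨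
    (∃ α < P.lam.ord, α.cof < P.mu ∧ B = {(α, 0)}) ∨
    (∃ α < P.lam.ord, P.mu < α.cof ∧ ∃ β < α, B = P.U3 α β)}

/-- the topology of `X[λ,μ,𝒜,C̄]`, generated by the basic open sets. -/
instance instTopo : TopologicalSpace ↥P.Xset :=
  TopologicalSpace.generateFrom {V | ∃ B ∈ P.basics, V = Subtype.val ⁻¹' B}

/-- the column `X_α` viewed inside the space. -/
def colS (α : Ordinal) : Set ↥P.Xset := {x | (x : Ordinal × Ordinal).1 = α}

/-- the projection `π(F) = {α < λ : F ∩ X_α ≠ ∅}`. -/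
def pi (F : Set ↥P.Xset) : Set Ordinal := {α | ∃ x ∈ F, (x : Ordinal × Ordinal).1 = α}

/-- `F` is unbounded iff `π(F)` is unbounded in `λ`. -/
def Unbounded (F : Set ↥P.Xset) : Prop := ∀ β < P.lam.ord, ∃ γ ∈ P.pi F, β < γ

/-- `F` is high enough iff `|{α < λ : |F_α| = |F|}| ≥ μ`. -/
def HighEnough (F : Set ↥P.Xset) : Prop :=
  Cardinal.lift.{1} P.mu ≤ #({α | #(↥(F ∩ P.colS α)) = #F} : Set Ordinal)

end Setup
end DSoukupPaper

namespace DSoukupPaper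

/-! ### Auxiliary lemmas -/

private lemma generateOpen_exists {X : Type*} {g : Set (Set X)} {ι : Type*} (B : ι → Set X)
    {x : X} (inh : Nonempty ι)
    (dir : ∀ i j : ι, ∃ k, B k ⊆ B i ∧ B k ⊆ B j)
    (hgen : ∀ s ∈ g, x ∈ s → ∃ i, B i ⊆ s) :
    ∀ V, TopologicalSpace.GenerateOpen g V → x ∈ V → ∃ i, B i ⊆ V := by
  intro V hV
  induction hV with
  | basic s hs => exact hgen s hs
  | univ => exact fun _ => ⟨Classical.choice inh, fun y _ => Set.mem_univ y⟩
  | inter s t _ _ ihs iht =>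
    intro hx
    obtain ⟨i, hi⟩ := ihs hx.1
    obtain ⟨j, hj⟩ := iht hx.2
    obtain ⟨k, hk1, hk2⟩ := dir i j
    exact ⟨k, Set.subset_inter (hk1.trans hi) (hk2.trans hj)⟩
  | sUnion S _ ih =>
    rintro ⟨s, hsS, hxs⟩
    obtain ⟨i, hi⟩ := ih s hsS hxs
    exact ⟨i, hi.trans (Set.subset_sUnion_of_mem hsS)⟩

private lemma cof_le_mk_of_unbounded {o : Ordinal.{0}} {S : Set Ordinal.{0}}
    (hS : S ⊆ Set.Iio o) (hub : ∀ β < o, ∃ γ ∈ S, β ≤ γ) :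
    Cardinal.lift.{1} o.cof ≤ #S := by
  classical
  let T : Set (Set.Iio o) := {b | b.1 ∈ S}
  have hT : IsCofinal T := fun b => by
    obtain ⟨γ, hγS, hγ⟩ := hub b.1 b.2
    exact ⟨⟨γ, hS hγS⟩, hγS, hγ⟩
  have h1 := Order.cof_le hT
  rw [Ordinal.cof_Iio, ← Ordinal.lift_cof] at h1
  refine h1.trans ?_
  exact Cardinal.mk_le_of_injective (f := fun b : T => (⟨b.1.1, b.2⟩ : S))
    (fun b c h => Subtype.ext (Subtype.ext (congrArg Subtype.val h :)))

private lemma mu_ord_isLimit (P : Setup) : Order.IsSuccLimit P.mu.ord :=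
  Cardinal.isSuccLimit_ord P.mu_reg.aleph0_le

private lemma succ_lt_mu (P : Setup) {ξ : Ordinal} (h : ξ < P.mu.ord) : ξ + 1 < P.mu.ord := by
  rw [Ordinal.add_one_eq_succ]
  exact (mu_ord_isLimit P).succ_lt h

private lemma mk_eq_of_unbounded (P : Setup) {N : Set Ordinal}
    (hsub : N ⊆ Set.Iio P.mu.ord) (hub : ∀ η < P.mu.ord, ∃ ξ ∈ N, η ≤ ξ) :
    Cardinal.mk N = Cardinal.lift.{1} P.mu := by
  refine le_antisymm ?_ ?_
  · calc #N ≤ #(Set.Iio P.mu.ord) := Cardinal.mk_le_mk_of_subset hsub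
      _ = Cardinal.lift.{1} P.mu.ord.card := Ordinal.mk_Iio_ordinal _
      _ = Cardinal.lift.{1} P.mu := by rw [Cardinal.card_ord]
  · have h := cof_le_mk_of_unbounded hsub hub
    rwa [P.mu_reg.cof_eq] at h

private lemma unbounded_of_mk_eq (P : Setup) {N : Set Ordinal}
    (hsub : N ⊆ Set.Iio P.mu.ord) (hcard : #N = Cardinal.lift.{1} P.mu) :
    ∀ η < P.mu.ord, ∃ ξ ∈ N, η ≤ ξ := by
  intro η hη
  by_contra h
  push_neg at h
  have hsub' : N ⊆ Set.Iio η := fun ξ hξ => h ξ hξ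
  have hle : #N ≤ Cardinal.lift.{1} η.card :=
    (Cardinal.mk_le_mk_of_subset hsub').trans_eq (Ordinal.mk_Iio_ordinal _)
  rw [hcard] at hle
  exact absurd (Cardinal.lt_ord.mp hη) (not_lt.mpr (Cardinal.lift_le.mp hle))

private lemma a_le_mono (P : Setup) {α : Ordinal} (hαS : α ∈ Sset P.lam.ord P.mu)
    {ζ ξ : Ordinal} (hξ : ξ < P.mu.ord) (h : ζ ≤ ξ) : P.a α ζ ≤ P.a α ξ := by
  rcases eq_or_lt_of_le h with rfl | h
  · exact le_rfl
  · exact (P.a_mono α hαS ξ hξ ζ h).le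

private lemma a_succ_gt (P : Setup) {α : Ordinal} (hαS : α ∈ Sset P.lam.ord P.mu)
    {ξ : Ordinal} (h : ξ + 1 < P.mu.ord) : P.a α ξ < P.a α (ξ + 1) :=
  P.a_mono α hαS (ξ + 1) h ξ (by rw [Ordinal.add_one_eq_succ]; exact Order.lt_succ ξ)

private lemma I_bounds (P : Setup) {α ξ γ : Ordinal} (h : γ ∈ P.I α ξ) :
    P.a α ξ ≤ γ ∧ γ ≤ P.a α (ξ + 1) ∧ (¬Order.IsSuccLimit ξ → P.a α ξ < γ) := by
  by_cases hl : Order.IsSuccLimit ξ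
  · simp only [Setup.I, if_pos hl, Set.mem_Icc] at h
    exact ⟨h.1, h.2, fun hc => absurd hl hc⟩
  · simp only [Setup.I, if_neg hl, Set.mem_Ioc] at h
    exact ⟨h.1.le, h.2, fun _ => h.1⟩

private lemma Ioc_subset_I (P : Setup) (α ξ : Ordinal) :
    Set.Ioc (P.a α ξ) (P.a α (ξ + 1)) ⊆ P.I α ξ := by
  unfold Setup.I
  split
  · exact Set.Ioc_subset_Icc_self
  · exact subset_rfl

private lemma I_lt (P : Setup) {α γ ξ : Ordinal} (hαS : α ∈ Sset P.lam.ord P.mu)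
    (hξ : ξ < P.mu.ord) (h : γ ∈ P.I α ξ) : γ < α :=
  ((I_bounds P h).2.1).trans_lt (P.a_lt α hαS (ξ + 1) (succ_lt_mu P hξ))

private lemma not_lub_at (P : Setup) {α₁ ξ α : Ordinal} (hα₁S : α₁ ∈ Sset P.lam.ord P.mu)
    (hξ : ξ < P.mu.ord) (hlim : Order.IsSuccLimit ξ) (heq : P.a α₁ ξ = α) (hcof : P.mu ≤ α.cof) :
    False := by
  have hlub := P.a_closed α₁ hα₁S ξ hξ hlim
  rw [heq] at hlub
  have hSsub : P.a α₁ '' Set.Iio ξ ⊆ Set.Iio α := by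
    rintro _ ⟨ζ, hζ, rfl⟩
    exact heq ▸ P.a_mono α₁ hα₁S ξ hξ ζ hζ
  have hub : ∀ β < α, ∃ γ ∈ P.a α₁ '' Set.Iio ξ, β ≤ γ := by
    intro β hβ
    by_contra h
    push_neg at h
    exact absurd (hlub.2 fun γ hγ => (h γ hγ).le) (not_le.mpr hβ)
  have h1 := cof_le_mk_of_unbounded hSsub hub
  have h2 : #(P.a α₁ '' Set.Iio ξ) ≤ Cardinal.lift.{1} ξ.card :=
    Cardinal.mk_image_le.trans_eq (Ordinal.mk_Iio_ordinal _)
  have h3 : P.mu ≤ ξ.card :=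
    Cardinal.lift_le.mp ((Cardinal.lift_le.mpr hcof).trans (h1.trans h2))
  exact absurd (Cardinal.lt_ord.mp hξ) (not_lt.mpr h3)

private lemma exists_interval (P : Setup) {α : Ordinal} (hαS : α ∈ Sset P.lam.ord P.mu)
    {η γ : Ordinal} (hη : η < P.mu.ord) (h1 : P.a α η < γ) (h2 : γ < α) :
    ∃ ξ, η ≤ ξ ∧ ξ < P.mu.ord ∧ γ ∈ P.I α ξ := by
  have hne : {ξ | ξ < P.mu.ord ∧ γ ≤ P.a α ξ}.Nonempty := by
    obtain ⟨ξ, hξ, hle⟩ := P.a_unbounded α hαS γ h2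
    exact ⟨ξ, hξ, hle⟩
  set ξ₀ := sInf {ξ | ξ < P.mu.ord ∧ γ ≤ P.a α ξ} with hξ₀def
  obtain ⟨hξ₀μ, hγle⟩ : ξ₀ < P.mu.ord ∧ γ ≤ P.a α ξ₀ := csInf_mem hne
  have hmin : ∀ ζ < ξ₀, P.a α ζ < γ := by
    intro ζ hζ
    by_contra hc
    exact absurd (csInf_le' (show ζ ∈ {ξ | ξ < P.mu.ord ∧ γ ≤ P.a α ξ} from ⟨hζ.trans hξ₀μ, not_lt.mp hc⟩)) (not_le.mpr hζ)
  have hηξ : η ≤ ξ₀ := by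
    by_contra hc
    push_neg at hc
    exact absurd hγle (not_le.mpr ((P.a_mono α hαS η hη ξ₀ hc).trans h1))
  rcases Ordinal.zero_or_succ_or_isSuccLimit ξ₀ with h0 | ⟨ζ, hζ⟩ | hlim
  · have hlt : P.a α 0 < γ := (a_le_mono P hαS hη (zero_le (a := η))).trans_lt h1
    rw [h0] at hγle
    exact absurd hγle (not_le.mpr hlt)
  · have hζlt : ζ < ξ₀ := hζ ▸ Order.lt_succ ζ
    have hζμ : ζ < P.mu.ord := hζlt.trans hξ₀μ
    have hγmem : γ ∈ P.I α ζ := Ioc_subset_I P α ζ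
      (Set.mem_Ioc.mpr ⟨hmin ζ hζlt, by rw [Ordinal.add_one_eq_succ, hζ]; exact hγle⟩)
    refine ⟨ζ, ?_, hζμ, hγmem⟩
    rcases eq_or_lt_of_le hηξ with he | hl
    · exfalso
      rw [← he] at hγle
      exact absurd hγle (not_le.mpr h1)
    · rw [← hζ] at hl
      exact Order.lt_succ_iff.mp hl
  · have hlub := P.a_closed α hαS ξ₀ hξ₀μ hlim
    have hub : γ ∈ upperBounds (P.a α '' Set.Iio ξ₀) := by
      rintro _ ⟨ζ, hζ, rfl⟩
      exact (hmin ζ hζ).le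
    have heq : γ = P.a α ξ₀ := le_antisymm hγle (hlub.2 hub)
    refine ⟨ξ₀, hηξ, hξ₀μ, ?_⟩
    simp only [Setup.I, if_pos hlim]
    exact Set.mem_Icc.mpr ⟨heq.ge, heq.le.trans
      (a_le_mono P hαS (succ_lt_mu P hξ₀μ) (le_self_add (a := ξ₀) (b := 1)))⟩

private lemma mem_U1_iff (P : Setup) {p : Ordinal × Ordinal} {α φ η : Ordinal} :
    p ∈ P.U1 α φ η ↔ p = (α, φ) ∨
      ∃ ξ, ξ ∈ P.M φ ∧ η ≤ ξ ∧ p ∈ P.Xset ∧ p.1 ∈ P.I α ξ := by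
  simp only [Setup.U1, Setup.col, Set.mem_union, Set.mem_singleton_iff, Set.mem_iUnion,
    Set.mem_setOf_eq, exists_prop]
  constructor
  · rintro (h | ⟨γ, ⟨ξ, ⟨hM, hη⟩, hγ⟩, hX, hfst⟩)
    · exact Or.inl h
    · exact Or.inr ⟨ξ, hM, hη, hX, by rw [hfst]; exact hγ⟩
  · rintro (h | ⟨ξ, hM, hη, hX, hI⟩)
    · exact Or.inl h
    · exact Or.inr ⟨p.1, ⟨ξ, ⟨hM, hη⟩, hI⟩, hX, rfl⟩

private lemma mem_U3_iff (P : Setup) {p : Ordinal × Ordinal} {α β : Ordinal} :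
    p ∈ P.U3 α β ↔ p ∈ P.Xset ∧ β < p.1 ∧ p.1 ≤ α := by
  simp only [Setup.U3, Setup.col, Set.mem_iUnion, Set.mem_setOf_eq, Set.mem_Ioc, exists_prop]
  constructor
  · rintro ⟨γ, ⟨hβγ, hγα⟩, hX, hfst⟩
    exact ⟨hX, by rw [hfst]; exact hβγ, by rw [hfst]; exact hγα⟩
  · rintro ⟨hX, hβ, hα⟩
    exact ⟨p.1, ⟨hβ, hα⟩, hX, rfl⟩

private lemma U1_anti (P : Setup) {α φ η η' : Ordinal} (h : η ≤ η') :
    P.U1 α φ η' ⊆ P.U1 α φ η := by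
  intro p hp
  rw [mem_U1_iff] at hp ⊢
  rcases hp with h1 | ⟨ξ, hM, hη, hX, hI⟩
  · exact Or.inl h1
  · exact Or.inr ⟨ξ, hM, h.trans hη, hX, hI⟩

private lemma U3_anti (P : Setup) {α β β' : Ordinal} (h : β ≤ β') :
    P.U3 α β' ⊆ P.U3 α β := by
  intro p hp
  rw [mem_U3_iff] at hp ⊢
  exact ⟨hp.1, h.trans_lt hp.2.1, hp.2.2⟩

/-- If `π(F)` accumulates to `α` of cofinality `η` with `μ ≤ η < λ`, then the derived
set of `F` meets the column `X_α`. -/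
theorem stmt10 (P : Setup) (F : Set ↥P.Xset) (α : Ordinal) (hα : α < P.lam.ord)
    (hcof : P.mu ≤ α.cof)
    (hacc : ∀ β < α, ∃ γ ∈ P.pi F, β < γ ∧ γ < α) :
    ∃ x : ↥P.Xset, (x : Ordinal × Ordinal).1 = α ∧
      ∀ V : Set ↥P.Xset, IsOpen V → x ∈ V → ∃ y ∈ F, y ∈ V ∧ y ≠ x := by
  rcases eq_or_lt_of_le hcof with hceq | hclt
  · -- Case `cof α = μ`, i.e. `α ∈ S^λ_μ`
    have hαS : α ∈ Sset P.lam.ord P.mu := ⟨hα, hceq.symm⟩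
    set N : Set Ordinal := {ξ | ξ < P.mu.ord ∧ ∃ γ ∈ P.pi F, γ ∈ P.I α ξ} with hNdef
    have hNsub : N ⊆ Set.Iio P.mu.ord := fun ξ h => h.1
    have hNub : ∀ η < P.mu.ord, ∃ ξ ∈ N, η ≤ ξ := by
      intro η hη
      obtain ⟨γ, hγpi, hγgt, hγlt⟩ := hacc (P.a α η) (P.a_lt α hαS η hη)
      obtain ⟨ξ, hηξ, hξμ, hγI⟩ := exists_interval P hαS hη hγgt hγlt
      exact ⟨ξ, ⟨hξμ, γ, hγpi, hγI⟩, hηξ⟩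
    obtain ⟨φ, hφ, hcard⟩ := P.M_mad N hNsub (mk_eq_of_unbounded P hNsub hNub)
    have hNM : ∀ η < P.mu.ord, ∃ ξ ∈ N ∩ P.M φ, η ≤ ξ :=
      unbounded_of_mk_eq P (fun ξ h => hNsub h.1) hcard
    have hxX : ((α, φ) : Ordinal × Ordinal) ∈ P.Xset := ⟨hα, Or.inl ⟨hαS, hφ⟩⟩
    refine ⟨⟨(α, φ), hxX⟩, rfl, ?_⟩
    intro V hV hxV
    have hdir : ∀ i j : {η : Ordinal // η < P.mu.ord},
        ∃ k : {η : Ordinal // η < P.mu.ord},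
          (Subtype.val ⁻¹' P.U1 α φ k.1 : Set ↥P.Xset) ⊆ Subtype.val ⁻¹' P.U1 α φ i.1 ∧
          (Subtype.val ⁻¹' P.U1 α φ k.1 : Set ↥P.Xset) ⊆ Subtype.val ⁻¹' P.U1 α φ j.1 := by
      intro i j
      exact ⟨⟨max i.1 j.1, max_lt i.2 j.2⟩,
        Set.preimage_mono (U1_anti P (le_max_left _ _)),
        Set.preimage_mono (U1_anti P (le_max_right _ _))⟩
    have hbase : ∀ s ∈ {V | ∃ B ∈ P.basics, V = Subtype.val ⁻¹' B},
        (⟨(α, φ), hxX⟩ : ↥P.Xset) ∈ s →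
        ∃ i : {η : Ordinal // η < P.mu.ord},
          (Subtype.val ⁻¹' P.U1 α φ i.1 : Set ↥P.Xset) ⊆ s := by
      rintro s ⟨B, hB, rfl⟩ hxs
      have hxB : ((α, φ) : Ordinal × Ordinal) ∈ B := hxs
      rcases hB with ⟨α₁, hα₁S, φ₁, hφ₁, η₁, hη₁, rfl⟩ | ⟨α₂, hα₂', hcof₂, rfl⟩ |
        ⟨α₃, hα₃, hcof₃, β₃, hβ₃, rfl⟩
      · rcases (mem_U1_iff P).mp hxB with heq | ⟨ξ, hξM, hξη, _, hI⟩
        · injection heq with h1 h2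
          subst h1; subst h2
          exact ⟨⟨η₁, hη₁⟩, subset_rfl⟩
        · have hI' : α ∈ P.I α₁ ξ := hI
          have hξμ : ξ < P.mu.ord := P.M_sub φ₁ hφ₁ hξM
          obtain ⟨hle, hup, hstr⟩ := I_bounds P hI'
          rcases eq_or_lt_of_le hle with heq2 | hlt2
          · by_cases hl : Order.IsSuccLimit ξ
            · exact (not_lub_at P hα₁S hξμ hl heq2 hcof).elim
            · exact absurd heq2 (ne_of_lt (hstr hl))
          · obtain ⟨η₂, hη₂, hle₂⟩ := P.a_unbounded α hαS (P.a α₁ ξ) hlt2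
            refine ⟨⟨η₂ + 1, succ_lt_mu P hη₂⟩, ?_⟩
            intro y hy
            rcases (mem_U1_iff P).mp hy with hyeq | ⟨ξ', hξ'M, hξ'η, hyX, hyI⟩
            · have h3 := hxB
              rw [← hyeq] at h3
              exact h3
            · have hξ'μ : ξ' < P.mu.ord := P.M_sub φ hφ hξ'M
              obtain ⟨hle', hup', _⟩ := I_bounds P hyI
              refine (mem_U1_iff P).mpr (Or.inr ⟨ξ, hξM, hξη, hyX,
                Ioc_subset_I P α₁ ξ ⟨?_, ?_⟩⟩)
              · calc P.a α₁ ξ ≤ P.a α η₂ := hle₂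
                  _ < P.a α (η₂ + 1) := a_succ_gt P hαS (succ_lt_mu P hη₂)
                  _ ≤ P.a α ξ' := a_le_mono P hαS hξ'μ hξ'η
                  _ ≤ (y : Ordinal × Ordinal).1 := hle'
              · exact hup'.trans
                  (((P.a_lt α hαS (ξ' + 1) (succ_lt_mu P hξ'μ)).le.trans hup))
      · rw [Set.mem_singleton_iff] at hxB
        have h2 : α = α₂ := congrArg Prod.fst hxB
        rw [← h2, ← hceq] at hcof₂
        exact absurd hcof₂ (lt_irrefl _)
      · obtain ⟨_, hβα, hαα₃⟩ := (mem_U3_iff P).mp hxB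
        have hne : α ≠ α₃ := by
          intro h
          rw [← h, ← hceq] at hcof₃
          exact lt_irrefl _ hcof₃
        have hαlt : α < α₃ := lt_of_le_of_ne hαα₃ hne
        obtain ⟨η₂, hη₂, hle₂⟩ := P.a_unbounded α hαS β₃ hβα
        refine ⟨⟨η₂ + 1, succ_lt_mu P hη₂⟩, ?_⟩
        intro y hy
        rcases (mem_U1_iff P).mp hy with hyeq | ⟨ξ', hξ'M, hξ'η, hyX, hyI⟩
        · have h3 := hxB
          rw [← hyeq] at h3
          exact h3
        · have hξ'μ : ξ' < P.mu.ord := P.M_sub φ hφ hξ'M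
          obtain ⟨hle', hup', _⟩ := I_bounds P hyI
          refine (mem_U3_iff P).mpr ⟨hyX, ?_, ?_⟩
          · calc β₃ ≤ P.a α η₂ := hle₂
              _ < P.a α (η₂ + 1) := a_succ_gt P hαS (succ_lt_mu P hη₂)
              _ ≤ P.a α ξ' := a_le_mono P hαS hξ'μ hξ'η
              _ ≤ (y : Ordinal × Ordinal).1 := hle'
          · exact (hup'.trans
              ((P.a_lt α hαS (ξ' + 1) (succ_lt_mu P hξ'μ)).le)).trans hαlt.le
    obtain ⟨⟨η, hη⟩, hsub⟩ := generateOpen_exists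
      (fun i : {η : Ordinal // η < P.mu.ord} =>
        (Subtype.val ⁻¹' P.U1 α φ i.1 : Set ↥P.Xset))
      ⟨⟨0, (mu_ord_isLimit P).pos⟩⟩ hdir hbase V hV hxV
    obtain ⟨ξ, ⟨⟨hξμ, γ, hγpi, hγI⟩, hξM⟩, hηξ⟩ := hNM η hη
    obtain ⟨y, hyF, hyfst⟩ := hγpi
    refine ⟨y, hyF, hsub ((mem_U1_iff P).mpr (Or.inr
      ⟨ξ, hξM, hηξ, y.2, by rw [hyfst]; exact hγI⟩)), ?_⟩
    intro h
    have h2 : (y : Ordinal × Ordinal).1 = α := by rw [h]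
    rw [hyfst] at h2
    exact absurd h2 (ne_of_lt (I_lt P hαS hξμ hγI))
  · -- Case `μ < cof α`
    have hnS : α ∉ Sset P.lam.ord P.mu := by
      intro h
      rw [h.2] at hclt
      exact lt_irrefl _ hclt
    have hxX : ((α, 0) : Ordinal × Ordinal) ∈ P.Xset := ⟨hα, Or.inr ⟨hnS, rfl⟩⟩
    have hα0 : (0 : Ordinal) < α := by
      rcases eq_zero_or_pos α with h | h
      · rw [h, Ordinal.cof_zero] at hclt
        exact absurd hclt (not_lt.mpr (Cardinal.zero_le _))
      · exact h
    refine ⟨⟨(α, 0), hxX⟩, rfl, ?_⟩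
    intro V hV hxV
    have hdir : ∀ i j : {β : Ordinal // β < α},
        ∃ k : {β : Ordinal // β < α},
          (Subtype.val ⁻¹' P.U3 α k.1 : Set ↥P.Xset) ⊆ Subtype.val ⁻¹' P.U3 α i.1 ∧
          (Subtype.val ⁻¹' P.U3 α k.1 : Set ↥P.Xset) ⊆ Subtype.val ⁻¹' P.U3 α j.1 := by
      intro i j
      exact ⟨⟨max i.1 j.1, max_lt i.2 j.2⟩,
        Set.preimage_mono (U3_anti P (le_max_left _ _)),
        Set.preimage_mono (U3_anti P (le_max_right _ _))⟩
    have hbase : ∀ s ∈ {V | ∃ B ∈ P.basics, V = Subtype.val ⁻¹' B},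
        (⟨(α, 0), hxX⟩ : ↥P.Xset) ∈ s →
        ∃ i : {β : Ordinal // β < α},
          (Subtype.val ⁻¹' P.U3 α i.1 : Set ↥P.Xset) ⊆ s := by
      rintro s ⟨B, hB, rfl⟩ hxs
      have hxB : ((α, 0) : Ordinal × Ordinal) ∈ B := hxs
      rcases hB with ⟨α₁, hα₁S, φ₁, hφ₁, η₁, hη₁, rfl⟩ | ⟨α₂, hα₂', hcof₂, rfl⟩ |
        ⟨α₃, hα₃, hcof₃, β₃, hβ₃, rfl⟩
      · rcases (mem_U1_iff P).mp hxB with heq | ⟨ξ, hξM, hξη, _, hI⟩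
        · injection heq with h1 h2
          exact absurd (h1 ▸ hα₁S : α ∈ Sset P.lam.ord P.mu) hnS
        · have hI' : α ∈ P.I α₁ ξ := hI
          have hξμ : ξ < P.mu.ord := P.M_sub φ₁ hφ₁ hξM
          obtain ⟨hle, hup, hstr⟩ := I_bounds P hI'
          rcases eq_or_lt_of_le hle with heq2 | hlt2
          · by_cases hl : Order.IsSuccLimit ξ
            · exact (not_lub_at P hα₁S hξμ hl heq2 hcof).elim
            · exact absurd heq2 (ne_of_lt (hstr hl))
          · refine ⟨⟨P.a α₁ ξ, hlt2⟩, ?_⟩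
            intro y hy
            obtain ⟨hyX, hygt, hyle⟩ := (mem_U3_iff P).mp hy
            exact (mem_U1_iff P).mpr (Or.inr ⟨ξ, hξM, hξη, hyX,
              Ioc_subset_I P α₁ ξ ⟨hygt, hyle.trans hup⟩⟩)
      · rw [Set.mem_singleton_iff] at hxB
        have h2 : α = α₂ := congrArg Prod.fst hxB
        rw [← h2] at hcof₂
        exact absurd (hclt.trans hcof₂) (lt_irrefl _)
      · obtain ⟨_, hβα, hαα₃⟩ := (mem_U3_iff P).mp hxB
        refine ⟨⟨β₃, hβα⟩, ?_⟩
        intro y hy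
        obtain ⟨hyX, hygt, hyle⟩ := (mem_U3_iff P).mp hy
        exact (mem_U3_iff P).mpr ⟨hyX, hygt, hyle.trans hαα₃⟩
    obtain ⟨⟨β, hβ⟩, hsub⟩ := generateOpen_exists
      (fun i : {β : Ordinal // β < α} =>
        (Subtype.val ⁻¹' P.U3 α i.1 : Set ↥P.Xset))
      ⟨⟨0, hα0⟩⟩ hdir hbase V hV hxV
    obtain ⟨γ, hγpi, hγgt, hγlt⟩ := hacc β hβ
    obtain ⟨y, hyF, hyfst⟩ := hγpi
    refine ⟨y, hyF, hsub ((mem_U3_iff P).mpr ⟨y.2, ?_, ?_⟩), ?_⟩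
    · rw [hyfst]; exact hγgt
    · rw [hyfst]; exact hγlt.le
    · intro h
      have h2 : (y : Ordinal × Ordinal).1 = α := by rw [h]
      rw [hyfst] at h2
      exact absurd h2 (ne_of_lt hγlt)
end DSoukupPaper
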